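/- Composability of greedy MIS: let G = (V,E) be a finite simple graph on n vertices, σ a linear order on V, and 1 ≤ k ≤ n. Let V_k be the set of the k σ-smallest vertices, let M_k = Greedy(G[V_k], σ restricted to V_k), and let W = (V \ V_k) \ N(M_k). Then Greedy(G,σ) = M_k ∪ Greedy(G[W], σ restricted to W). -/
import Mathlib


/-- The greedy (lexicographically first) independent set of a finite simple graph `G`
with respect to a linear order `σ` on its vertices: a vertex `v` is added iff no
neighbor of `v` preceding `v` in `σ` has already been added. -/
noncomputable def greedy {V : Type*} [Finite V] (σ : LinearOrder V) (G : SimpleGraph V) :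
    Set V :=
  letI := σ
  fun v => WellFounded.fix (Finite.wellFounded_of_trans_of_irrefl ((· < ·) : V → V → Prop))
    (fun v ih => ∀ u, (h : u < v) → G.Adj u v → ¬ ih u h) v

/-- The restriction of a linear order `σ` on `V` to a subset `U ⊆ V`. -/
noncomputable def restrictOrder {V : Type*} (σ : LinearOrder V) (U : Set V) :
    LinearOrder ↥U :=
  letI := σ
  inferInstance

/-- The closed neighborhood `N(S)` of a vertex set `S`: the union of `S` with the set of
all vertices adjacent in `G` to some vertex of `S`. -/
def closedN {V : Type*} (G : SimpleGraph V) (S : Set V) : Set V :=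
  S ∪ {v | ∃ s ∈ S, G.Adj s v}

/-- Fixed-point characterization of membership in the greedy independent set. -/
lemma mem_greedy_iff {V : Type*} [Finite V] (σ : LinearOrder V) (G : SimpleGraph V) (v : V) :
    v ∈ greedy σ G ↔ ∀ u, σ.lt u v → G.Adj u v → u ∉ greedy σ G := by
  letI := σ
  exact Iff.of_eq
    (WellFounded.fix_eq (Finite.wellFounded_of_trans_of_irrefl ((· < ·) : V → V → Prop))
      (fun v ih => ∀ u, (h : u < v) → G.Adj u v → ¬ ih u h) v)

/-- Composability of greedy MIS: if `V_k` is the set of the `k` `σ`-smallest vertices,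
`M_k = Greedy(G[V_k], σ|V_k)`, and `W = (V \ V_k) \ N(M_k)`, then
`Greedy(G,σ) = M_k ∪ Greedy(G[W], σ|W)`. -/
theorem greedy_composable {V : Type*} [Finite V] (σ : LinearOrder V) (G : SimpleGraph V)
    (k : ℕ) (hk1 : 1 ≤ k) (hk2 : k ≤ Nat.card V) :
    let Vk : Set V := {v | ({u | σ.lt u v}).ncard < k}
    let Mk : Set V := Subtype.val '' greedy (restrictOrder σ Vk) (G.induce Vk)
    let W : Set V := Vkᶜ \ closedN G Mk
    greedy σ G = Mk ∪ Subtype.val '' greedy (restrictOrder σ W) (G.induce W) := by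
  intro Vk Mk W
  letI := σ
  -- `Vk` is downward closed
  have hdc : ∀ {u v : V}, v ∈ Vk → u < v → u ∈ Vk := by
    intro u v hv huv
    exact lt_of_le_of_lt
      (Set.ncard_le_ncard (fun w hw => lt_trans hw huv) (Set.toFinite _)) hv
  have MkVk : Mk ⊆ Vk := by
    rintro x ⟨y, _, rfl⟩; exact y.2
  have lt_of_not_Vk : ∀ {s v : V}, v ∉ Vk → s ∈ Vk → s < v := by
    intro s v hv hs
    rcases lt_trichotomy s v with h | rfl | h
    · exact h
    · exact absurd hs hv
    · exact absurd (hdc hs h) hv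
  have mem_Mk_iff : ∀ (u : V) (h : u ∈ Vk),
      u ∈ Mk ↔ (⟨u, h⟩ : ↥Vk) ∈ greedy (restrictOrder σ Vk) (G.induce Vk) := by
    intro u h
    constructor
    · rintro ⟨y, hy, rfl⟩; exact hy
    · intro h'; exact ⟨⟨u, h⟩, h', rfl⟩
  have mem_imW_iff : ∀ (u : V) (h : u ∈ W),
      u ∈ Subtype.val '' greedy (restrictOrder σ W) (G.induce W) ↔
        (⟨u, h⟩ : ↥W) ∈ greedy (restrictOrder σ W) (G.induce W) := by
    intro u h
    constructor
    · rintro ⟨y, hy, rfl⟩; exact hy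
    · intro h'; exact ⟨⟨u, h⟩, h', rfl⟩
  have main : ∀ v : V, v ∈ greedy σ G ↔
      (v ∈ Mk ∨ v ∈ Subtype.val '' greedy (restrictOrder σ W) (G.induce W)) := by
    intro v
    refine (Finite.wellFounded_of_trans_of_irrefl ((· < ·) : V → V → Prop)).induction
      (C := fun v => v ∈ greedy σ G ↔
        (v ∈ Mk ∨ v ∈ Subtype.val '' greedy (restrictOrder σ W) (G.induce W))) v ?_
    intro v IH
    by_cases hv : v ∈ Vk
    · -- initial segment case: membership agrees with the greedy set of `G[Vk]`
      have hnim : v ∉ Subtype.val '' greedy (restrictOrder σ W) (G.induce W) := by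
        rintro ⟨y, _, rfl⟩; exact y.2.1 hv
      rw [mem_greedy_iff]
      constructor
      · intro h
        left
        rw [mem_Mk_iff v hv, mem_greedy_iff]
        intro u hlt hadj hu
        have hu' : (u : V) ∈ Mk := (mem_Mk_iff u u.2).2 hu
        exact h u hlt hadj ((IH u hlt).2 (Or.inl hu'))
      · rintro (hMk | him)
        · intro u hlt hadj hug
          have huVk : u ∈ Vk := hdc hv hlt
          rcases (IH u hlt).1 hug with huMk | huim
          · have := (mem_Mk_iff v hv).1 hMk
            rw [mem_greedy_iff] at this
            exact this ⟨u, huVk⟩ hlt hadj ((mem_Mk_iff u huVk).1 huMk)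
          · rcases huim with ⟨y, _, rfl⟩; exact y.2.1 huVk
        · exact absurd him hnim
    · by_cases hcn : v ∈ closedN G Mk
      · -- dominated case: both sides are false
        have hvMk : v ∉ Mk := fun h => hv (MkVk h)
        obtain ⟨s, hsMk, hadj⟩ : ∃ s ∈ Mk, G.Adj s v := by
          rcases hcn with h | h
          · exact absurd h hvMk
          · exact h
        have hslt : s < v := lt_of_not_Vk hv (MkVk hsMk)
        have hsg : s ∈ greedy σ G := (IH s hslt).2 (Or.inl hsMk)
        constructor
        · intro h
          rw [mem_greedy_iff] at h
          exact absurd hsg (h s hslt hadj)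
        · rintro (h | ⟨y, _, rfl⟩)
          · exact absurd h hvMk
          · exact absurd hcn y.2.2
      · -- remaining case: `v ∈ W`
        have hvW : v ∈ W := ⟨hv, hcn⟩
        have hvMk : v ∉ Mk := fun h => hv (MkVk h)
        rw [mem_greedy_iff]
        constructor
        · intro h
          right
          rw [mem_imW_iff v hvW, mem_greedy_iff]
          intro u hlt hadj hu
          have hu' : (u : V) ∈ Subtype.val '' greedy (restrictOrder σ W) (G.induce W) :=
            (mem_imW_iff u u.2).2 hu
          exact h u hlt hadj ((IH u hlt).2 (Or.inr hu'))
        · rintro (hMk | him)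
          · exact absurd hMk hvMk
          · intro u hlt hadj hug
            rcases (IH u hlt).1 hug with huMk | huim
            · exact hcn (Or.inr ⟨u, huMk, hadj⟩)
            · rcases huim with ⟨y, hy, rfl⟩
              rw [mem_imW_iff v hvW, mem_greedy_iff] at him
              exact him y hlt hadj hy
  ext v
  rw [Set.mem_union]
  exact main v
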